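/- Let m, n be integers. Then every 2×2 matrix whose four entries are 4m² + mn, 4m² − mn, n² + mn, n² − mn in some order has integer eigenvalues. -/
import Mathlib

lemma pair2 {z w c d : ℤ} (h : ({z, w} : Multiset ℤ) = {c, d}) :
    (z = c ∧ w = d) ∨ (z = d ∧ w = c) := by
  simp only [Multiset.insert_eq_cons] at h
  have hz : z = c ∨ z = d := by
    have : z ∈ (c ::ₘ ({d} : Multiset ℤ)) := by rw [← h]; simp
    simpa using this
  rcases hz with rfl | rfl
  · left
    refine ⟨rfl, ?_⟩
    have := (Multiset.cons_inj_right (a := z)).mp h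
    simpa using this
  · right
    rw [← Multiset.cons_zero z, Multiset.cons_swap c z] at h
    have := (Multiset.cons_inj_right (a := z)).mp h
    refine ⟨rfl, by simpa using this⟩

lemma tri3 {y z w b c d : ℤ} (h : ({y, z, w} : Multiset ℤ) = {b, c, d}) :
    (y = b ∧ ({z, w} : Multiset ℤ) = {c, d}) ∨
    (y = c ∧ ({z, w} : Multiset ℤ) = {b, d}) ∨
    (y = d ∧ ({z, w} : Multiset ℤ) = {b, c}) := by
  simp only [Multiset.insert_eq_cons] at h ⊢
  have hy : y = b ∨ y = c ∨ y = d := by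
    have : y ∈ (b ::ₘ c ::ₘ ({d} : Multiset ℤ)) := by rw [← h]; simp
    simpa using this
  rcases hy with rfl | rfl | rfl
  · exact Or.inl ⟨rfl, (Multiset.cons_inj_right (a := y)).mp h⟩
  · right; left
    rw [Multiset.cons_swap b y] at h
    exact ⟨rfl, (Multiset.cons_inj_right (a := y)).mp h⟩
  · right; right
    rw [← Multiset.cons_zero y, Multiset.cons_swap c y, Multiset.cons_swap b y] at h
    refine ⟨rfl, ?_⟩
    have := (Multiset.cons_inj_right (a := y)).mp h
    simpa using this

lemma quad4 {x y z w a b c d : ℤ} (h : ({x, y, z, w} : Multiset ℤ) = {a, b, c, d}) :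
    (x = a ∧ ({y, z, w} : Multiset ℤ) = {b, c, d}) ∨
    (x = b ∧ ({y, z, w} : Multiset ℤ) = {a, c, d}) ∨
    (x = c ∧ ({y, z, w} : Multiset ℤ) = {a, b, d}) ∨
    (x = d ∧ ({y, z, w} : Multiset ℤ) = {a, b, c}) := by
  simp only [Multiset.insert_eq_cons] at h ⊢
  have hx : x = a ∨ x = b ∨ x = c ∨ x = d := by
    have : x ∈ (a ::ₘ b ::ₘ c ::ₘ ({d} : Multiset ℤ)) := by rw [← h]; simp
    simpa using this
  rcases hx with rfl | rfl | rfl | rfl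
  · exact Or.inl ⟨rfl, (Multiset.cons_inj_right (a := x)).mp h⟩
  · right; left
    rw [Multiset.cons_swap a x] at h
    exact ⟨rfl, (Multiset.cons_inj_right (a := x)).mp h⟩
  · right; right; left
    rw [Multiset.cons_swap b x, Multiset.cons_swap a x] at h
    exact ⟨rfl, (Multiset.cons_inj_right (a := x)).mp h⟩
  · right; right; right
    rw [← Multiset.cons_zero x, Multiset.cons_swap c x, Multiset.cons_swap b x,
      Multiset.cons_swap a x] at h
    refine ⟨rfl, ?_⟩
    have := (Multiset.cons_inj_right (a := x)).mp h
    simpa using this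



/-- A 2×2 integer matrix has integer eigenvalues if its characteristic polynomial
splits over ℤ, i.e. there are integers λ₁, λ₂ with λ₁ + λ₂ = trace M and λ₁·λ₂ = det M. -/
def hasIntEigenvalues (M : Matrix (Fin 2) (Fin 2) ℤ) : Prop :=
  ∃ lam1 lam2 : ℤ, lam1 + lam2 = Matrix.trace M ∧ lam1 * lam2 = Matrix.det M

/-- The multiset of entries of a 2×2 integer matrix. -/
def entriesMultiset (M : Matrix (Fin 2) (Fin 2) ℤ) : Multiset ℤ :=
  {M 0 0, M 0 1, M 1 0, M 1 1}

/-- For any integers m, n, every 2×2 matrix whose entries are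
4m² + mn, 4m² − mn, n² + mn, n² − mn in some order has integer eigenvalues. -/
theorem stmt_11 (m n : ℤ) :
    ∀ M : Matrix (Fin 2) (Fin 2) ℤ,
      entriesMultiset M =
        {4 * m ^ 2 + m * n, 4 * m ^ 2 - m * n, n ^ 2 + m * n, n ^ 2 - m * n} →
      hasIntEigenvalues M := by
  intro M h
  rw [entriesMultiset] at h
  rcases quad4 h with ⟨e1, h3⟩ | ⟨e1, h3⟩ | ⟨e1, h3⟩ | ⟨e1, h3⟩ <;>
    rcases tri3 h3 with ⟨e2, h4⟩ | ⟨e2, h4⟩ | ⟨e2, h4⟩ <;>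
    rcases pair2 h4 with ⟨e3, e4⟩ | ⟨e3, e4⟩ <;>
    first
      | (refine ⟨4 * m ^ 2 + n ^ 2, 4 * m ^ 2 - n ^ 2, ?_, ?_⟩ <;>
          simp only [Matrix.trace_fin_two, Matrix.det_fin_two, e1, e2, e3, e4] <;> ring1)
      | (refine ⟨n ^ 2 + 4 * m ^ 2, n ^ 2 - 4 * m ^ 2, ?_, ?_⟩ <;>
          simp only [Matrix.trace_fin_two, Matrix.det_fin_two, e1, e2, e3, e4] <;> ring1)
      | (refine ⟨4 * m ^ 2 + n ^ 2, 2 * m * n, ?_, ?_⟩ <;>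
          simp only [Matrix.trace_fin_two, Matrix.det_fin_two, e1, e2, e3, e4] <;> ring1)
      | (refine ⟨4 * m ^ 2 + n ^ 2, -(2 * m * n), ?_, ?_⟩ <;>
          simp only [Matrix.trace_fin_two, Matrix.det_fin_two, e1, e2, e3, e4] <;> ring1)
      | (refine ⟨4 * m ^ 2 + 2 * m * n, n ^ 2 - 2 * m * n, ?_, ?_⟩ <;>
          simp only [Matrix.trace_fin_two, Matrix.det_fin_two, e1, e2, e3, e4] <;> ring1)
      | (refine ⟨4 * m ^ 2 - 2 * m * n, n ^ 2 + 2 * m * n, ?_, ?_⟩ <;>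
          simp only [Matrix.trace_fin_two, Matrix.det_fin_two, e1, e2, e3, e4] <;> ring1)
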